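/- arXiv:2202.06453 — 3 statements merged into one kernel-verified Lean document; each statement's English description precedes it below -/
import Mathlib

section
/- If ρ = ReLU((τ/2)·λ_max(Ω^{1/2} A_θ W Ω^{-1/2} + Ω^{-1/2} Wᵀ A_θᵀ Ω^{1/2}) − 1 + δ) for some δ > 0, and A = A_θ/(ρ+1), then Ω(AW − (1/τ)I) + (Wᵀ Aᵀ − (1/τ)I)Ω ⪯ −(2δ/(τ(ρ+1)))Ω ≺ 0; in particular the matrix AW − (1/τ)I is Lyapunov diagonally stable. -/
open Matrix

open Classical in
noncomputable def lambdaMax {m : Type*} [Fintype m] [DecidableEq m]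
    (M : Matrix m m ℝ) : ℝ :=
  if h : M.IsHermitian then ⨆ i, h.eigenvalues i else 0

/-- A real matrix `M` is Lyapunov diagonally stable if there exists a positive diagonal `Ω`
with `ΩM + MᵀΩ ≺ 0`. -/
def LyapunovDiagStable {l : ℕ} (M : Matrix (Fin l) (Fin l) ℝ) : Prop :=
  ∃ ω : Fin l → ℝ, (∀ i, 0 < ω i) ∧
    (-(Matrix.diagonal ω * M + Mᵀ * Matrix.diagonal ω)).PosDef

lemma posSemidef_smul_real {l : ℕ} {X : Matrix (Fin l) (Fin l) ℝ} (hX : X.PosSemidef)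
    {r : ℝ} (hr : 0 ≤ r) : (r • X).PosSemidef := by
  constructor
  · rw [Matrix.IsHermitian, conjTranspose_smul, hX.1.eq, star_trivial]
  · intro x
    exact (hX.smul hr).2 x

lemma lambdaMax_smul_one_sub_posSemidef {l : ℕ} {M : Matrix (Fin l) (Fin l) ℝ}
    (hM : M.IsHermitian) :
    ((lambdaMax M) • (1 : Matrix (Fin l) (Fin l) ℝ) - M).PosSemidef := by
  set lam := lambdaMax M with hlamdef
  have hlam : ∀ i, hM.eigenvalues i ≤ lam := by
    intro i
    rw [hlamdef, lambdaMax, dif_pos hM]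
    exact le_ciSup (Set.Finite.bddAbove (Set.finite_range _)) i
  set U := (hM.eigenvectorUnitary : Matrix (Fin l) (Fin l) ℝ) with hUdef
  have hU : U * star U = 1 := mem_unitaryGroup_iff.mp hM.eigenvectorUnitary.2
  have hdiag : diagonal (RCLike.ofReal ∘ hM.eigenvalues)
      = lam • (1 : Matrix (Fin l) (Fin l) ℝ)
        - diagonal (fun i => lam - hM.eigenvalues i) := by
    ext i j
    by_cases h : i = j <;> simp [h, diagonal_apply, Matrix.one_apply]
  have hdecomp : lam • (1 : Matrix (Fin l) (Fin l) ℝ) - M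
      = U * diagonal (fun i => lam - hM.eigenvalues i) * star U := by
    conv_lhs => rw [hM.spectral_theorem, hdiag]
    rw [Unitary.conjStarAlgAut_apply, ← hUdef]
    rw [mul_sub, sub_mul, Matrix.mul_smul, mul_one, Matrix.smul_mul, hU]
    exact sub_sub_cancel _ _
  rw [hdecomp]
  have hd : (diagonal fun i => lam - hM.eigenvalues i).PosSemidef :=
    posSemidef_diagonal_iff.mpr fun i => sub_nonneg.mpr (hlam i)
  simpa [star_eq_conjTranspose] using hd.mul_mul_conjTranspose_same U

/-- with ρ given by the ReLU formula and A = A_θ/(ρ+1),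
Ω(AW − (1/τ)I) + (WᵀAᵀ − (1/τ)I)Ω ⪯ −(2δ/(τ(ρ+1)))Ω ≺ 0; in particular
AW − (1/τ)I is Lyapunov diagonally stable. -/
theorem iss_parametrization_lds {n l : ℕ} (hln : n ≤ l) (τ δ : ℝ) (hτ : 0 < τ) (hδ : 0 < δ)
    (Aθ : Matrix (Fin l) (Fin n) ℝ) (W : Matrix (Fin n) (Fin l) ℝ)
    (ω : Fin l → ℝ) (hω : ∀ i, 0 < ω i) :
    let Ωm : Matrix (Fin l) (Fin l) ℝ := Matrix.diagonal ω
    let Ωh : Matrix (Fin l) (Fin l) ℝ := Matrix.diagonal fun i => Real.sqrt (ω i)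
    let Ωhinv : Matrix (Fin l) (Fin l) ℝ := Matrix.diagonal fun i => (Real.sqrt (ω i))⁻¹
    let M : Matrix (Fin l) (Fin l) ℝ := Ωh * (Aθ * W) * Ωhinv + Ωhinv * (Wᵀ * Aθᵀ) * Ωh
    let ρ : ℝ := max 0 ((τ / 2) * lambdaMax M - 1 + δ)
    let A : Matrix (Fin l) (Fin n) ℝ := (ρ + 1)⁻¹ • Aθ
    let L : Matrix (Fin l) (Fin l) ℝ :=
      Ωm * (A * W - τ⁻¹ • 1) + (Wᵀ * Aᵀ - τ⁻¹ • 1) * Ωm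
    ((-(2 * δ / (τ * (ρ + 1)))) • Ωm - L).PosSemidef ∧
      ((2 * δ / (τ * (ρ + 1))) • Ωm).PosDef ∧
      LyapunovDiagStable (A * W - τ⁻¹ • 1) := by
  intro Ωm Ωh Ωhinv M ρ A L
  have hsω : ∀ i, 0 < Real.sqrt (ω i) := fun i => Real.sqrt_pos.mpr (hω i)
  have hsq : ∀ i, Real.sqrt (ω i) * Real.sqrt (ω i) = ω i :=
    fun i => Real.mul_self_sqrt (hω i).le
  have hρ0 : (0:ℝ) ≤ ρ := le_max_left _ _
  have hρ1 : (0:ℝ) < ρ + 1 := by linarith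
  have hτ' : τ ≠ 0 := ne_of_gt hτ
  have hT' : Wᵀ * Aθᵀ = (Aθ * W)ᵀ := (transpose_mul Aθ W).symm
  have hMh : M.IsHermitian := by
    unfold M Ωh Ωhinv
    rw [Matrix.IsHermitian]
    ext i j
    rw [hT']
    simp only [conjTranspose_apply, Matrix.add_apply, Matrix.mul_diagonal,
      Matrix.diagonal_mul, Matrix.transpose_apply, star_trivial]
    ring
  have hρge : (τ/2) * lambdaMax M - 1 + δ ≤ ρ := le_max_right _ _
  set c : ℝ := 2 * (ρ + 1 - δ) / τ with hcdef
  have hc : lambdaMax M ≤ c := by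
    rw [hcdef, le_div_iff₀ hτ]
    nlinarith
  have hcM : (c • (1 : Matrix (Fin l) (Fin l) ℝ) - M).PosSemidef := by
    have h1 := lambdaMax_smul_one_sub_posSemidef hMh
    have h2 : ((c - lambdaMax M) • (1 : Matrix (Fin l) (Fin l) ℝ)).PosSemidef :=
      posSemidef_smul_real (Matrix.PosDef.one.posSemidef) (sub_nonneg.mpr hc)
    have heq : c • (1 : Matrix (Fin l) (Fin l) ℝ) - M
        = (c - lambdaMax M) • 1 + (lambdaMax M • 1 - M) := by
      rw [sub_smul]; abel
    rw [heq]; exact h2.add h1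
  have hΩhH : Ωhᴴ = Ωh := by
    unfold Ωh; simp [diagonal_conjTranspose]
  have hpsd2 : (Ωh * (c • (1 : Matrix (Fin l) (Fin l) ℝ) - M) * Ωh).PosSemidef := by
    have := hcM.mul_mul_conjTranspose_same Ωh
    rwa [hΩhH] at this
  have hTeq : (-(2 * δ / (τ * (ρ + 1)))) • Ωm - L
      = (ρ + 1)⁻¹ • (Ωh * (c • (1 : Matrix (Fin l) (Fin l) ℝ) - M) * Ωh) := by
    unfold L A M Ωm Ωh Ωhinv
    set s : Fin l → ℝ := fun i => Real.sqrt (ω i) with hs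
    have hsne : ∀ i, s i ≠ 0 := fun i => (hsω i).ne'
    have hssq : ∀ i, s i * s i = ω i := hsq
    ext i j
    by_cases h : i = j
    · subst h
      simp only [Matrix.sub_apply, Matrix.add_apply, Matrix.smul_apply,
        Matrix.mul_diagonal, Matrix.diagonal_mul, Matrix.smul_mul, Matrix.mul_smul,
        Matrix.transpose_smul, Matrix.one_apply_eq, Matrix.diagonal_apply_eq,
        Matrix.transpose_apply, smul_eq_mul, hcdef, hT']
      rw [← hssq i]
      field_simp [hsne i]
      rw [Real.sqrt_sq (show 0 ≤ s i from (hsω i).le)]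
      ring
    · simp only [Matrix.sub_apply, Matrix.add_apply, Matrix.smul_apply,
        Matrix.mul_diagonal, Matrix.diagonal_mul, Matrix.smul_mul, Matrix.mul_smul,
        Matrix.transpose_smul, Matrix.one_apply_ne h, Matrix.diagonal_apply_ne _ h,
        Matrix.transpose_apply, smul_eq_mul, hcdef, hT']
      rw [← hssq i, ← hssq j]
      field_simp [hsne i, hsne j]
      rw [Real.sqrt_sq (show 0 ≤ s i from (hsω i).le), Real.sqrt_sq (show 0 ≤ s j from (hsω j).le)]
      ring
  have hTpsd : ((-(2 * δ / (τ * (ρ + 1)))) • Ωm - L).PosSemidef := by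
    rw [hTeq]
    exact posSemidef_smul_real hpsd2 (inv_nonneg.mpr hρ1.le)
  have hPD : ((2 * δ / (τ * (ρ + 1))) • Ωm).PosDef := by
    unfold Ωm
    have hrw : (2 * δ / (τ * (ρ + 1))) • (Matrix.diagonal ω)
        = Matrix.diagonal (fun i => (2 * δ / (τ * (ρ + 1))) * ω i) := by
      ext i j
      by_cases h : i = j
      · subst h; simp
      · simp [Matrix.diagonal_apply_ne _ h]
    rw [hrw]
    exact posDef_diagonal_iff.mpr fun i =>
      mul_pos (div_pos (by linarith) (mul_pos hτ hρ1)) (hω i)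
  refine ⟨hTpsd, hPD, ω, hω, ?_⟩
  have hKT : (A * W - τ⁻¹ • (1 : Matrix (Fin l) (Fin l) ℝ))ᵀ = Wᵀ * Aᵀ - τ⁻¹ • 1 := by
    simp [transpose_sub, transpose_mul, transpose_smul]
  have hsplit : -(Matrix.diagonal ω * (A * W - τ⁻¹ • 1)
        + (A * W - τ⁻¹ • 1)ᵀ * Matrix.diagonal ω)
      = ((-(2 * δ / (τ * (ρ + 1)))) • Ωm - L) + (2 * δ / (τ * (ρ + 1))) • Ωm := by
    unfold L Ωm
    rw [hKT]
    simp only [neg_smul]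
    abel
  rw [hsplit]
  exact Matrix.PosDef.posSemidef_add hTpsd hPD
end

section
/- Let f(x) = −x/τ + W σ_ℓ(Ax + c) + ν where AW − (1/τ)I is Lyapunov diagonally stable with certificate Ω (i.e., Ω(AW − (1/τ)I) + (WᵀAᵀ − (1/τ)I)Ω ≺ 0) and σ_ℓ is elementwise slope-restricted in [0,1]. Then the map g(z) = −z/τ + AW σ_ℓ(z) is one-to-one on ℝ^ℓ, i.e., g(z₁) = g(z₂) implies z₁ = z₂. -/
open Matrix

lemma slope_nonneg_aux (σ : ℝ → ℝ)
    (hs : ∀ r r' : ℝ, r ≠ r' →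
      0 ≤ (σ r - σ r') / (r - r') ∧ (σ r - σ r') / (r - r') ≤ 1)
    (r r' : ℝ) : 0 ≤ (σ r - σ r') * ((r - r') - (σ r - σ r')) := by
  by_cases h : r = r'
  · simp [h]
  · obtain ⟨h1, h2⟩ := hs r r' h
    have hd : r - r' ≠ 0 := sub_ne_zero.mpr h
    set d := r - r' with hdd
    set s := (σ r - σ r') / d with hss
    have ha : σ r - σ r' = s * d := by exact (div_mul_cancel₀ _ hd).symm
    rw [ha]
    nlinarith [sq_nonneg d, mul_nonneg h1 (sub_nonneg.mpr h2)]

/-- under the Lyapunov diagonal stability certificate for AW − (1/τ)I and a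
[0,1] slope-restricted σ, the map g(z) = −z/τ + AW σ_ℓ(z) is injective. -/
theorem lds_implies_injective {l n : ℕ} (τ : ℝ) (hτ : 0 < τ)
    (A : Matrix (Fin l) (Fin n) ℝ) (W : Matrix (Fin n) (Fin l) ℝ)
    (ω : Fin l → ℝ) (hω : ∀ i, 0 < ω i)
    (σ : ℝ → ℝ)
    (hs : ∀ r r' : ℝ, r ≠ r' →
      0 ≤ (σ r - σ r') / (r - r') ∧ (σ r - σ r') / (r - r') ≤ 1)
    (hLDS : (-(Matrix.diagonal ω * (A * W - τ⁻¹ • 1) +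
        (A * W - τ⁻¹ • (1 : Matrix (Fin l) (Fin l) ℝ))ᵀ * Matrix.diagonal ω)).PosDef) :
    Function.Injective
      (fun z : Fin l → ℝ => -(τ⁻¹) • z + (A * W).mulVec fun i => σ (z i)) := by
  intro z₁ z₂ h
  simp only at h
  set u : Fin l → ℝ := z₁ - z₂ with hu
  set v : Fin l → ℝ := (fun i => σ (z₁ i)) - (fun i => σ (z₂ i)) with hv
  have hτ' : (0:ℝ) < τ⁻¹ := inv_pos.mpr hτ
  -- From h : AW v = τ⁻¹ • u
  have hMv : (A * W) *ᵥ v = τ⁻¹ • u := by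
    funext i
    have hi := congrFun h i
    simp only [Pi.add_apply, Pi.smul_apply, Pi.neg_apply, smul_eq_mul, neg_smul,
      neg_mul] at hi
    have hw : ((A * W) *ᵥ v) i
        = ((A * W) *ᵥ fun i => σ (z₁ i)) i - ((A * W) *ᵥ fun i => σ (z₂ i)) i := by
      rw [hv, mulVec_sub, Pi.sub_apply]
    rw [hw]
    simp only [hu, Pi.smul_apply, Pi.sub_apply, smul_eq_mul]
    linarith
  -- Bv = τ⁻¹ • (u - v)
  set B : Matrix (Fin l) (Fin l) ℝ := A * W - τ⁻¹ • (1 : Matrix (Fin l) (Fin l) ℝ) with hB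
  have hBv : B *ᵥ v = τ⁻¹ • (u - v) := by
    rw [hB, sub_mulVec, hMv, smul_mulVec, one_mulVec]
    simp [hu, smul_sub]
  -- pointwise nonnegativity
  have hpt : ∀ i, 0 ≤ v i * (u i - v i) := by
    intro i
    have := slope_nonneg_aux σ hs (z₁ i) (z₂ i)
    simpa [hv, hu] using this
  -- v = 0
  have hv0 : v = 0 := by
    by_contra hne
    have hpos := hLDS.dotProduct_mulVec_pos hne
    have hquad : v ⬝ᵥ ((-(Matrix.diagonal ω * B + Bᵀ * Matrix.diagonal ω)) *ᵥ v) ≤ 0 := by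
      rw [neg_mulVec, add_mulVec, dotProduct_neg, dotProduct_add,
        ← mulVec_mulVec, ← mulVec_mulVec, hBv,
        dotProduct_mulVec (A := Bᵀ), vecMul_transpose, hBv]
      have e1 : v ⬝ᵥ Matrix.diagonal ω *ᵥ τ⁻¹ • (u - v)
          = ∑ i, τ⁻¹ * (ω i * (v i * (u i - v i))) := by
        simp [dotProduct, mulVec_diagonal, Pi.smul_apply, Pi.sub_apply, smul_eq_mul]
        ring_nf
        apply Finset.sum_congr rfl
        intro i _
        ring
      have e2 : (τ⁻¹ • (u - v)) ⬝ᵥ Matrix.diagonal ω *ᵥ v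
          = ∑ i, τ⁻¹ * (ω i * (v i * (u i - v i))) := by
        simp [dotProduct, mulVec_diagonal, Pi.smul_apply, Pi.sub_apply, smul_eq_mul]
        ring_nf
        apply Finset.sum_congr rfl
        intro i _
        ring
      rw [e1, e2]
      have hsum : 0 ≤ ∑ i, τ⁻¹ * (ω i * (v i * (u i - v i))) := by
        apply Finset.sum_nonneg
        intro i _
        exact mul_nonneg hτ'.le (mul_nonneg (hω i).le (hpt i))
      linarith
    have hpos' : (0:ℝ) < v ⬝ᵥ ((-(Matrix.diagonal ω * B + Bᵀ * Matrix.diagonal ω)) *ᵥ v) := by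
      simpa [hB] using hpos
    linarith
  -- conclude
  have hu0 : τ⁻¹ • u = 0 := by rw [← hMv, hv0, mulVec_zero]
  have : u = 0 := by
    funext i
    have := congrFun hu0 i
    simp only [Pi.smul_apply, smul_eq_mul, Pi.zero_apply] at this
    have := mul_eq_zero.mp this
    rcases this with h' | h'
    · exact absurd h' (ne_of_gt hτ')
    · exact h'
  have := sub_eq_zero.mp (by rw [← hu]; exact this)
  exact this
end

section
/- Suppose ẋ = f(x, u) admits a smooth function V with c₁‖x‖² ≤ V(x) ≤ c₂‖x‖² and ∇V(x)ᵀ f(x,u) ≤ −λ‖x‖² whenever ‖x‖ ≥ g(‖u‖), where c₁, c₂, λ > 0 and g is a class-K function. Then for every bounded measurable input u and every solution x(t), we have the ISS estimate ‖x(t)‖ ≤ √(c₂/c₁) e^{−(λ/(2c₂))t}‖x(0)‖ + √(c₂/c₁) g(sup_s ‖u(s)‖) for all t ≥ 0. -/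
open scoped RealInnerProductSpace

/-- quantitative ISS-Lyapunov theorem under quadratic bounds:
if c₁‖x‖² ≤ V(x) ≤ c₂‖x‖² and ∇V(x)ᵀf(x,u) ≤ −λ‖x‖² whenever ‖x‖ ≥ g(‖u‖) for a
class-K function g, then every solution satisfies
‖x(t)‖ ≤ √(c₂/c₁)e^{−(λ/(2c₂))t}‖x(0)‖ + √(c₂/c₁)·g(sup_s‖u(s)‖). -/
theorem iss_lyapunov_quadratic_estimate {n m : ℕ}
    (f : EuclideanSpace ℝ (Fin n) → EuclideanSpace ℝ (Fin m) → EuclideanSpace ℝ (Fin n))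
    (hflip : LocallyLipschitz
      (fun p : EuclideanSpace ℝ (Fin n) × EuclideanSpace ℝ (Fin m) => f p.1 p.2))
    (V : EuclideanSpace ℝ (Fin n) → ℝ) (hV : ContDiff ℝ 1 V)
    (c₁ c₂ lam : ℝ) (hc₁ : 0 < c₁) (hc₂ : 0 < c₂) (hlam : 0 < lam)
    (g : ℝ → ℝ) (hg0 : g 0 = 0) (hgmono : StrictMonoOn g (Set.Ici 0))
    (hgcont : ContinuousOn g (Set.Ici 0)) (hgnonneg : ∀ r : ℝ, 0 ≤ r → 0 ≤ g r)
    (hlow : ∀ x, c₁ * ‖x‖ ^ 2 ≤ V x) (hupp : ∀ x, V x ≤ c₂ * ‖x‖ ^ 2)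
    (hdiss : ∀ x u', g ‖u'‖ ≤ ‖x‖ → ⟪gradient V x, f x u'⟫ ≤ -lam * ‖x‖ ^ 2)
    (u : ℝ → EuclideanSpace ℝ (Fin m)) (humeas : Measurable u)
    (hubdd : BddAbove (Set.range fun s : ℝ => ‖u s‖))
    (x : ℝ → EuclideanSpace ℝ (Fin n))
    (hx : ∀ t : ℝ, HasDerivAt x (f (x t) (u t)) t) :
    ∀ t : ℝ, 0 ≤ t →
      ‖x t‖ ≤ Real.sqrt (c₂ / c₁) * Real.exp (-(lam / (2 * c₂)) * t) * ‖x 0‖ +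
        Real.sqrt (c₂ / c₁) * g (⨆ s : ℝ, ‖u s‖) := by
  intro t ht
  set M : ℝ := ⨆ s : ℝ, ‖u s‖ with hMdef
  have hM0 : (0:ℝ) ≤ M := (norm_nonneg (u 0)).trans (le_ciSup hubdd 0)
  have huM : ∀ s, ‖u s‖ ≤ M := fun s => le_ciSup hubdd s
  set b : ℝ := g M with hbdef
  have hb0 : 0 ≤ b := hgnonneg M hM0
  set k : ℝ := lam / c₂ with hkdef
  have hk : 0 < k := div_pos hlam hc₂
  set W : ℝ → ℝ := fun s => V (x s) with hWdef
  -- derivative of W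
  have hWd : ∀ s, HasDerivAt W (⟪gradient V (x s), f (x s) (u s)⟫) s := by
    intro s
    have h1 : HasGradientAt V (gradient V (x s)) (x s) :=
      ((hV.differentiable one_ne_zero) (x s)).hasGradientAt
    have h2 := (hasGradientAt_iff_hasFDerivAt.mp h1).comp_hasDerivAt s (hx s)
    exact h2
  have hWd' : ∀ s, HasDerivAt W (deriv W s) s := fun s => by
    rw [(hWd s).deriv]; exact hWd s
  have hxc : Continuous x := Differentiable.continuous (fun s => (hx s).differentiableAt)
  have hWc : Continuous W := hV.continuous.comp hxc
  have hW0 : ∀ s, 0 ≤ W s := fun s => le_trans (by positivity) (hlow (x s))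
  have hkc : k * c₂ = lam := div_mul_cancel₀ lam hc₂.ne'
  -- dissipation in deriv form
  have hdecay : ∀ s, c₂ * b ^ 2 < W s → deriv W s ≤ -(k * W s) := by
    intro s hs
    have hu2 : W s ≤ c₂ * ‖x s‖ ^ 2 := hupp (x s)
    have hx2 : b ^ 2 < ‖x s‖ ^ 2 := by nlinarith
    have hbx : b < ‖x s‖ := lt_of_pow_lt_pow_left₀ 2 (norm_nonneg _) hx2
    have hgu : g ‖u s‖ ≤ b :=
      hgmono.monotoneOn (Set.mem_Ici.mpr (norm_nonneg _)) (Set.mem_Ici.mpr hM0) (huM s)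
    have h1 := hdiss (x s) (u s) (hgu.trans hbx.le)
    rw [(hWd s).deriv]
    nlinarith [mul_le_mul_of_nonneg_left hu2 hk.le]
  -- exponential comparison on intervals where W is large
  have hmono : ∀ a d : ℝ, a ≤ d → (∀ s ∈ Set.Ioo a d, c₂ * b ^ 2 < W s) →
      W d * Real.exp (k * d) ≤ W a * Real.exp (k * a) := by
    intro a d had hprop
    have hed : ∀ s : ℝ, HasDerivAt (fun r => Real.exp (k * r)) (Real.exp (k * s) * k) s :=
      fun s => by simpa using ((hasDerivAt_id s).const_mul k).exp
    have hφd : ∀ s : ℝ, HasDerivAt (fun r => W r * Real.exp (k * r))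
        (deriv W s * Real.exp (k * s) + W s * (Real.exp (k * s) * k)) s :=
      fun s => (hWd' s).mul (hed s)
    have hanti : AntitoneOn (fun r => W r * Real.exp (k * r)) (Set.Icc a d) := by
      apply antitoneOn_of_deriv_nonpos (convex_Icc a d)
      · exact (hWc.mul (Real.continuous_exp.comp (continuous_const.mul continuous_id))).continuousOn
      · intro s _
        exact ((hφd s).differentiableAt).differentiableWithinAt
      · intro s hs
        rw [interior_Icc] at hs
        rw [(hφd s).deriv]
        have hd := hdecay s (hprop s hs)
        nlinarith [Real.exp_pos (k * s), hW0 s]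
    exact hanti (Set.left_mem_Icc.mpr had) (Set.right_mem_Icc.mpr had) had
  have hc0 : (0:ℝ) ≤ c₂ * b ^ 2 := by positivity
  -- main estimate on W
  have main : W t ≤ W 0 * Real.exp (-k * t) + c₂ * b ^ 2 := by
    by_cases hS : ∃ s ∈ Set.Icc (0:ℝ) t, W s ≤ c₂ * b ^ 2
    · set S : Set ℝ := Set.Icc (0:ℝ) t ∩ {s | W s ≤ c₂ * b ^ 2} with hSdef
      have hSne : S.Nonempty := by
        obtain ⟨s, hs1, hs2⟩ := hS; exact ⟨s, hs1, hs2⟩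
      have hScomp : IsCompact S :=
        isCompact_Icc.inter_right (isClosed_le hWc continuous_const)
      have hs' : sSup S ∈ S := hScomp.sSup_mem hSne
      have hIoo : ∀ s ∈ Set.Ioo (sSup S) t, c₂ * b ^ 2 < W s := by
        intro s hs
        by_contra h
        push_neg at h
        have hmem : s ∈ S := ⟨⟨hs'.1.1.trans hs.1.le, hs.2.le⟩, h⟩
        have := le_csSup hScomp.bddAbove hmem
        linarith [hs.1]
      have hm := hmono (sSup S) t hs'.1.2 hIoo
      have h5 : W t * Real.exp (k * t) ≤ (c₂ * b ^ 2) * Real.exp (k * t) :=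
        calc W t * Real.exp (k * t) ≤ W (sSup S) * Real.exp (k * sSup S) := hm
          _ ≤ (c₂ * b ^ 2) * Real.exp (k * sSup S) :=
              mul_le_mul_of_nonneg_right hs'.2 (Real.exp_pos _).le
          _ ≤ (c₂ * b ^ 2) * Real.exp (k * t) :=
              mul_le_mul_of_nonneg_left
                (Real.exp_le_exp.mpr (mul_le_mul_of_nonneg_left hs'.1.2 hk.le)) hc0
      have h6 : W t ≤ c₂ * b ^ 2 := le_of_mul_le_mul_right h5 (Real.exp_pos _)
      have h7 : 0 ≤ W 0 * Real.exp (-k * t) := mul_nonneg (hW0 0) (Real.exp_nonneg _)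
      linarith
    · push_neg at hS
      have hm := hmono 0 t ht (fun s hs => hS s ⟨hs.1.le, hs.2.le⟩)
      rw [mul_zero, Real.exp_zero, mul_one] at hm
      have h8 : W t ≤ W 0 * Real.exp (-k * t) := by
        rw [neg_mul, Real.exp_neg, ← div_eq_mul_inv]
        exact (le_div_iff₀ (Real.exp_pos _)).mpr hm
      linarith
  -- final arithmetic
  set e₂ : ℝ := Real.exp (-(lam / (2 * c₂)) * t) with he₂def
  have he₂ : 0 < e₂ := Real.exp_pos _
  have hsq : e₂ ^ 2 = Real.exp (-k * t) := by
    rw [he₂def, sq, ← Real.exp_add, hkdef]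
    congr 1
    field_simp
    ring
  set s₀ : ℝ := Real.sqrt (c₂ / c₁) with hs₀def
  have hs₀ : 0 ≤ s₀ := Real.sqrt_nonneg _
  have hs₀c : c₁ * s₀ ^ 2 = c₂ := by
    rw [hs₀def, Real.sq_sqrt (by positivity : (0:ℝ) ≤ c₂ / c₁)]
    field_simp
  have hWt : c₁ * ‖x t‖ ^ 2 ≤ W t := hlow (x t)
  have hW0u : W 0 ≤ c₂ * ‖x 0‖ ^ 2 := hupp (x 0)
  have h3 : W 0 * Real.exp (-k * t) ≤ c₂ * ‖x 0‖ ^ 2 * Real.exp (-k * t) :=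
    mul_le_mul_of_nonneg_right hW0u (Real.exp_pos _).le
  have key : c₁ * ‖x t‖ ^ 2 ≤ c₂ * ‖x 0‖ ^ 2 * Real.exp (-k * t) + c₂ * b ^ 2 := by
    linarith
  have hRsq : c₁ * (s₀ * e₂ * ‖x 0‖ + s₀ * b) ^ 2 = c₂ * (e₂ * ‖x 0‖ + b) ^ 2 := by
    have h9 : (s₀ * e₂ * ‖x 0‖ + s₀ * b) ^ 2 = s₀ ^ 2 * (e₂ * ‖x 0‖ + b) ^ 2 := by ring
    rw [h9, ← mul_assoc, hs₀c]
  have key' : c₁ * ‖x t‖ ^ 2 ≤ c₂ * ‖x 0‖ ^ 2 * e₂ ^ 2 + c₂ * b ^ 2 := by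
    rw [hsq]; exact key
  have h4 : c₁ * ‖x t‖ ^ 2 ≤ c₁ * (s₀ * e₂ * ‖x 0‖ + s₀ * b) ^ 2 := by
    rw [hRsq]
    nlinarith [key', mul_nonneg (mul_nonneg hc₂.le he₂.le)
      (mul_nonneg (norm_nonneg (x 0)) hb0)]
  have h10 : ‖x t‖ ^ 2 ≤ (s₀ * e₂ * ‖x 0‖ + s₀ * b) ^ 2 :=
    le_of_mul_le_mul_left (by linarith) hc₁
  have hR0 : 0 ≤ s₀ * e₂ * ‖x 0‖ + s₀ * b := by positivity
  by_contra hcon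
  push_neg at hcon
  have := pow_lt_pow_left₀ hcon hR0 (by norm_num : (2:ℕ) ≠ 0)
  linarith
end
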